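/- Let (C, Δ, Q) be a Rota-Baxter coalgebra of weight 0. Define Δ̃(c) = Q(c₁)⊗c₂ − Q(c₂)⊗c₁. Then (C, Δ̃) is a pre-Lie coalgebra: (Δ̃⊗id)Δ̃ − (id⊗Δ̃)Δ̃ is invariant under swapping the first two tensor factors. -/

import Mathlib

open TensorProduct LinearMap

/-- Rota--Baxter coalgebra of weight `γ`:
`Q(c₁)⊗Q(c₂) = Q(c)₁⊗Q(Q(c)₂) + Q(Q(c)₁)⊗Q(c)₂ + γ Q(c)₁⊗Q(c)₂`. -/
def IsRotaBaxterCoalgebra (K : Type*) [Field K] {C : Type*} [AddCommGroup C] [Module K C]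
    (D : C →ₗ[K] C ⊗[K] C) (Q : C →ₗ[K] C) (γ : K) : Prop :=
  TensorProduct.map Q Q ∘ₗ D =
    lTensor C Q ∘ₗ D ∘ₗ Q + rTensor C Q ∘ₗ D ∘ₗ Q + γ • (D ∘ₗ Q)

/-- The associator `(Δ⊗id)Δ − (id⊗Δ)Δ` of a comultiplication (with the usual
reassociation). -/
noncomputable def coassociator (K : Type*) [Field K] {C : Type*} [AddCommGroup C] [Module K C]
    (D : C →ₗ[K] C ⊗[K] C) : C →ₗ[K] (C ⊗[K] C) ⊗[K] C :=
  rTensor C D ∘ₗ D - (TensorProduct.assoc K C C C).symm.toLinearMap ∘ₗ lTensor C D ∘ₗ D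

/-- `(C, D)` is a pre-Lie coalgebra: the associator is invariant under swapping the first
two tensor factors. -/
def IsPreLieCoalgebra (K : Type*) [Field K] {C : Type*} [AddCommGroup C] [Module K C]
    (D : C →ₗ[K] C ⊗[K] C) : Prop :=
  coassociator K D =
    rTensor C (TensorProduct.comm K C C).toLinearMap ∘ₗ coassociator K D

section Aux

variable {K : Type*} [Field K] {C : Type*} [AddCommGroup C] [Module K C]

/-- `(Q⊗1⊗1)∘(τ⊗1) = (τ⊗1)∘(1⊗Q⊗1)` on `(C⊗C)⊗C`, with a tail. -/
lemma aux_Ps {X : Type*} [AddCommGroup X] [Module K X] (Q : C →ₗ[K] C)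
    (f : X →ₗ[K] (C ⊗[K] C) ⊗[K] C) :
    rTensor C (rTensor C Q) ∘ₗ (rTensor C (TensorProduct.comm K C C).toLinearMap ∘ₗ f) =
      rTensor C (TensorProduct.comm K C C).toLinearMap ∘ₗ (rTensor C (lTensor C Q) ∘ₗ f) := by
  rw [← comp_assoc, ← comp_assoc]
  congr 1
  apply TensorProduct.ext_threefold
  intro x y z
  simp

/-- `(τ⊗1)∘(τ⊗1) = id` on `(C⊗C)⊗C`, with a tail. -/
lemma aux_ss {X : Type*} [AddCommGroup X] [Module K X]
    (f : X →ₗ[K] (C ⊗[K] C) ⊗[K] C) :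
    rTensor C (TensorProduct.comm K C C).toLinearMap ∘ₗ
      (rTensor C (TensorProduct.comm K C C).toLinearMap ∘ₗ f) = f := by
  rw [← comp_assoc]
  conv_rhs => rw [← id_comp f]
  congr 1
  apply TensorProduct.ext_threefold
  intro x y z
  simp

/-- `(1⊗D)∘(Q⊗1) = (Q⊗1⊗1)∘(1⊗D)`, with a tail. -/
lemma aux_lDrQ {X : Type*} [AddCommGroup X] [Module K X] (D : C →ₗ[K] C ⊗[K] C)
    (Q : C →ₗ[K] C) (f : X →ₗ[K] C ⊗[K] C) :
    lTensor C D ∘ₗ (rTensor C Q ∘ₗ f) =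
      rTensor (C ⊗[K] C) Q ∘ₗ (lTensor C D ∘ₗ f) := by
  rw [← comp_assoc, ← comp_assoc, lTensor_comp_rTensor, rTensor_comp_lTensor]

/-- `(1⊗D)∘τ = comm∘(D⊗1)`, with a tail. -/
lemma aux_lDt {X : Type*} [AddCommGroup X] [Module K X] (D : C →ₗ[K] C ⊗[K] C)
    (f : X →ₗ[K] C ⊗[K] C) :
    lTensor C D ∘ₗ ((TensorProduct.comm K C C).toLinearMap ∘ₗ f) =
      (TensorProduct.comm K (C ⊗[K] C) C).toLinearMap ∘ₗ (rTensor C D ∘ₗ f) := by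
  rw [← comp_assoc, ← comp_assoc]
  congr 1
  apply TensorProduct.ext'
  intro x y
  simp

/-- `(D⊗1)∘τ = comm∘(1⊗D)`, with a tail. -/
lemma aux_rDt {X : Type*} [AddCommGroup X] [Module K X] (D : C →ₗ[K] C ⊗[K] C)
    (f : X →ₗ[K] C ⊗[K] C) :
    rTensor C D ∘ₗ ((TensorProduct.comm K C C).toLinearMap ∘ₗ f) =
      (TensorProduct.comm K C (C ⊗[K] C)).toLinearMap ∘ₗ (lTensor C D ∘ₗ f) := by
  rw [← comp_assoc, ← comp_assoc]
  congr 1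
  apply TensorProduct.ext'
  intro x y
  simp

lemma aux_sub_swap {G : Type*} [AddCommGroup G] {a b c d : G} (h : a - c = b - d) :
    a - b = c - d := by
  rw [eq_add_of_sub_eq h]
  abel

/-- The auxiliary map `(1 - τ₁₂) ∘ α ∘ (1⊗(Q⊗1)) ∘ (1⊗(1-τ)) ∘ (Q⊗1⊗1)`. -/
noncomputable def auxZ (K : Type*) [Field K] {C : Type*} [AddCommGroup C] [Module K C]
    (Q : C →ₗ[K] C) : C ⊗[K] (C ⊗[K] C) →ₗ[K] (C ⊗[K] C) ⊗[K] C :=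
  (LinearMap.id - rTensor C (TensorProduct.comm K C C).toLinearMap) ∘ₗ
    (TensorProduct.assoc K C C C).symm.toLinearMap ∘ₗ
    lTensor C (rTensor C Q) ∘ₗ
    (LinearMap.id - lTensor C (TensorProduct.comm K C C).toLinearMap) ∘ₗ
    rTensor (C ⊗[K] C) Q

/-- Structural expansion of `T1 - s∘T1`. -/
lemma claim1 (D : C →ₗ[K] C ⊗[K] C) (Q : C →ₗ[K] C) :
    rTensor C (rTensor C Q ∘ₗ D -
        rTensor C Q ∘ₗ (TensorProduct.comm K C C).toLinearMap ∘ₗ D) ∘ₗ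
      (rTensor C Q ∘ₗ D - rTensor C Q ∘ₗ (TensorProduct.comm K C C).toLinearMap ∘ₗ D) -
    rTensor C (TensorProduct.comm K C C).toLinearMap ∘ₗ
      (rTensor C (rTensor C Q ∘ₗ D -
          rTensor C Q ∘ₗ (TensorProduct.comm K C C).toLinearMap ∘ₗ D) ∘ₗ
        (rTensor C Q ∘ₗ D - rTensor C Q ∘ₗ (TensorProduct.comm K C C).toLinearMap ∘ₗ D)) =
    rTensor C ((LinearMap.id - (TensorProduct.comm K C C).toLinearMap) ∘ₗ
        (lTensor C Q ∘ₗ (D ∘ₗ Q) + rTensor C Q ∘ₗ (D ∘ₗ Q))) ∘ₗ D -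
    rTensor C ((LinearMap.id - (TensorProduct.comm K C C).toLinearMap) ∘ₗ
        (lTensor C Q ∘ₗ (D ∘ₗ Q) + rTensor C Q ∘ₗ (D ∘ₗ Q))) ∘ₗ
      ((TensorProduct.comm K C C).toLinearMap ∘ₗ D) := by
  simp only [rTensor_sub, rTensor_add, rTensor_comp, rTensor_id, comp_sub, sub_comp,
    comp_add, add_comp, comp_assoc, id_comp, aux_Ps, aux_ss]
  abel

/-- Structural expansion of `T2 - s∘T2`. -/
lemma claim2 (D : C →ₗ[K] C ⊗[K] C) (Q : C →ₗ[K] C) :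
    (TensorProduct.assoc K C C C).symm.toLinearMap ∘ₗ
      lTensor C (rTensor C Q ∘ₗ D -
        rTensor C Q ∘ₗ (TensorProduct.comm K C C).toLinearMap ∘ₗ D) ∘ₗ
      (rTensor C Q ∘ₗ D - rTensor C Q ∘ₗ (TensorProduct.comm K C C).toLinearMap ∘ₗ D) -
    rTensor C (TensorProduct.comm K C C).toLinearMap ∘ₗ
      ((TensorProduct.assoc K C C C).symm.toLinearMap ∘ₗ
        lTensor C (rTensor C Q ∘ₗ D -
          rTensor C Q ∘ₗ (TensorProduct.comm K C C).toLinearMap ∘ₗ D) ∘ₗ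
        (rTensor C Q ∘ₗ D - rTensor C Q ∘ₗ (TensorProduct.comm K C C).toLinearMap ∘ₗ D)) =
    auxZ K Q ∘ₗ (lTensor C D ∘ₗ D) -
    auxZ K Q ∘ₗ ((TensorProduct.comm K (C ⊗[K] C) C).toLinearMap ∘ₗ (rTensor C D ∘ₗ D)) := by
  unfold auxZ
  simp only [lTensor_sub, lTensor_comp, comp_sub, sub_comp, comp_assoc, id_comp,
    aux_lDrQ, aux_lDt]
  abel

/-- The final purely structural identity. -/
lemma claimE (Q : C →ₗ[K] C) :
    rTensor C ((LinearMap.id - (TensorProduct.comm K C C).toLinearMap) ∘ₗ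
        TensorProduct.map Q Q) -
      rTensor C ((LinearMap.id - (TensorProduct.comm K C C).toLinearMap) ∘ₗ
        TensorProduct.map Q Q) ∘ₗ
        ((TensorProduct.comm K C (C ⊗[K] C)).toLinearMap ∘ₗ
          (TensorProduct.assoc K C C C).toLinearMap) =
    auxZ K Q ∘ₗ (TensorProduct.assoc K C C C).toLinearMap -
      auxZ K Q ∘ₗ (TensorProduct.comm K (C ⊗[K] C) C).toLinearMap := by
  unfold auxZ
  apply TensorProduct.ext_threefold
  intro x y z
  simp only [LinearMap.sub_apply, comp_apply, LinearEquiv.coe_coe, assoc_tmul, comm_tmul,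
    assoc_symm_tmul, rTensor_tmul, lTensor_tmul, map_tmul, id_coe, id_eq, sub_comp,
    id_comp, map_sub, sub_tmul, tmul_sub]
  abel

end Aux

theorem rotaBaxterCoalgebra_weightZero_preLie
    (K : Type*) [Field K] (C : Type*) [AddCommGroup C] [Module K C]
    (D : C →ₗ[K] C ⊗[K] C)
    (hcoassoc : rTensor C D ∘ₗ D =
      (TensorProduct.assoc K C C C).symm.toLinearMap ∘ₗ lTensor C D ∘ₗ D)
    (Q : C →ₗ[K] C) (hQ : IsRotaBaxterCoalgebra K D Q 0)
    -- D'(c) = Q(c₁)⊗c₂ − Q(c₂)⊗c₁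
    (D' : C →ₗ[K] C ⊗[K] C)
    (hD' : D' = rTensor C Q ∘ₗ D -
      rTensor C Q ∘ₗ (TensorProduct.comm K C C).toLinearMap ∘ₗ D) :
    IsPreLieCoalgebra K D' := by
  have hRB : TensorProduct.map Q Q ∘ₗ D =
      lTensor C Q ∘ₗ (D ∘ₗ Q) + rTensor C Q ∘ₗ (D ∘ₗ Q) := by
    have h := hQ
    unfold IsRotaBaxterCoalgebra at h
    simpa using h
  have haα : (TensorProduct.assoc K C C C).toLinearMap ∘ₗ
      (TensorProduct.assoc K C C C).symm.toLinearMap = LinearMap.id := by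
    apply LinearMap.ext
    intro x
    simp
  have ha : (TensorProduct.assoc K C C C).toLinearMap ∘ₗ (rTensor C D ∘ₗ D) =
      lTensor C D ∘ₗ D := by
    rw [hcoassoc, ← comp_assoc, haα, id_comp]
  have e1 : rTensor C ((LinearMap.id - (TensorProduct.comm K C C).toLinearMap) ∘ₗ
      (TensorProduct.map Q Q ∘ₗ D)) =
      rTensor C ((LinearMap.id - (TensorProduct.comm K C C).toLinearMap) ∘ₗ
        TensorProduct.map Q Q) ∘ₗ rTensor C D := by
    rw [← rTensor_comp, comp_assoc]
  subst hD'
  unfold IsPreLieCoalgebra coassociator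
  rw [comp_sub _ _ (rTensor C (TensorProduct.comm K C C).toLinearMap)]
  have key :=
    calc rTensor C (rTensor C Q ∘ₗ D -
              rTensor C Q ∘ₗ (TensorProduct.comm K C C).toLinearMap ∘ₗ D) ∘ₗ
            (rTensor C Q ∘ₗ D -
              rTensor C Q ∘ₗ (TensorProduct.comm K C C).toLinearMap ∘ₗ D) -
          rTensor C (TensorProduct.comm K C C).toLinearMap ∘ₗ
            (rTensor C (rTensor C Q ∘ₗ D -
                rTensor C Q ∘ₗ (TensorProduct.comm K C C).toLinearMap ∘ₗ D) ∘ₗ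
              (rTensor C Q ∘ₗ D -
                rTensor C Q ∘ₗ (TensorProduct.comm K C C).toLinearMap ∘ₗ D))
        = _ := claim1 D Q
    _ = rTensor C ((LinearMap.id - (TensorProduct.comm K C C).toLinearMap) ∘ₗ
            (TensorProduct.map Q Q ∘ₗ D)) ∘ₗ D -
          rTensor C ((LinearMap.id - (TensorProduct.comm K C C).toLinearMap) ∘ₗ
            (TensorProduct.map Q Q ∘ₗ D)) ∘ₗ
            ((TensorProduct.comm K C C).toLinearMap ∘ₗ D) := by rw [hRB]
    _ = rTensor C ((LinearMap.id - (TensorProduct.comm K C C).toLinearMap) ∘ₗ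
            TensorProduct.map Q Q) ∘ₗ rTensor C D ∘ₗ D -
          rTensor C ((LinearMap.id - (TensorProduct.comm K C C).toLinearMap) ∘ₗ
            TensorProduct.map Q Q) ∘ₗ
            (TensorProduct.comm K C (C ⊗[K] C)).toLinearMap ∘ₗ
            (TensorProduct.assoc K C C C).toLinearMap ∘ₗ rTensor C D ∘ₗ D := by
          rw [e1]
          simp only [comp_assoc, aux_rDt, ← ha]
    _ = (rTensor C ((LinearMap.id - (TensorProduct.comm K C C).toLinearMap) ∘ₗ
            TensorProduct.map Q Q) -
          rTensor C ((LinearMap.id - (TensorProduct.comm K C C).toLinearMap) ∘ₗ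
            TensorProduct.map Q Q) ∘ₗ
            ((TensorProduct.comm K C (C ⊗[K] C)).toLinearMap ∘ₗ
              (TensorProduct.assoc K C C C).toLinearMap)) ∘ₗ (rTensor C D ∘ₗ D) := by
          simp only [sub_comp, comp_assoc]
    _ = (auxZ K Q ∘ₗ (TensorProduct.assoc K C C C).toLinearMap -
          auxZ K Q ∘ₗ (TensorProduct.comm K (C ⊗[K] C) C).toLinearMap) ∘ₗ
          (rTensor C D ∘ₗ D) := by rw [claimE]
    _ = auxZ K Q ∘ₗ (lTensor C D ∘ₗ D) -
          auxZ K Q ∘ₗ ((TensorProduct.comm K (C ⊗[K] C) C).toLinearMap ∘ₗ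
            (rTensor C D ∘ₗ D)) := by
          simp only [sub_comp, comp_assoc, ha]
    _ = _ := (claim2 D Q).symm
  exact aux_sub_swap (G := C →ₗ[K] (C ⊗[K] C) ⊗[K] C) key
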